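/- arXiv:2006.09355 — 4 statements merged into one kernel-verified Lean document; each statement's English description precedes it below -/
import Mathlib

section
/- Let (Ω₁, P₁) be a probability space, μ_X a Borel probability measure on ℝ^d with bounded support, φ : ℝ → ℝ a bounded continuous activation such that the span of {x ↦ φ(⟨u, x⟩) : u ∈ ℝ^d} is dense in L²(μ_X), and let w : Ω₁ → ℝ^d be a random variable with supp(law(w)) = ℝ^d. If g ∈ L²(μ_X) satisfies ∫ g(x) φ(⟨w(c₁), x⟩) dμ_X(x) = 0 for P₁-almost every c₁, then g = 0 in L²(μ_X). -/
open MeasureTheory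
open scoped RealInnerProductSpace

/-- universal approximation plus full support of the first-layer
weights forces an orthogonal `g` to vanish. -/
theorem orthogonal_to_random_features_eq_zero
    {Ω₁ : Type*} [MeasureSpace Ω₁] (P₁ : Measure Ω₁) [IsProbabilityMeasure P₁]
    (d : ℕ) (μX : Measure (EuclideanSpace ℝ (Fin d))) [IsProbabilityMeasure μX]
    (R : ℝ) (hbdd : ∀ᵐ x ∂μX, ‖x‖ ≤ R)
    (φ : ℝ → ℝ) (hφc : Continuous φ) (hφb : ∃ C : ℝ, ∀ s, |φ s| ≤ C)
    (hUAP : Dense (↑(Submodule.span ℝ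
      {F : Lp ℝ 2 μX | ∃ u : EuclideanSpace ℝ (Fin d),
        (F : EuclideanSpace ℝ (Fin d) → ℝ) =ᵐ[μX] fun x => φ ⟪u, x⟫}) :
        Set (Lp ℝ 2 μX)))
    (w : Ω₁ → EuclideanSpace ℝ (Fin d)) (hw : Measurable w)
    (hsupp : ∀ U : Set (EuclideanSpace ℝ (Fin d)), IsOpen U → U.Nonempty →
      0 < (P₁.map w) U)
    (g : Lp ℝ 2 μX)
    (horth : ∀ᵐ c₁ ∂P₁, ∫ x, g x * φ ⟪w c₁, x⟫ ∂μX = 0) :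
    g = 0 := by
  obtain ⟨C, hC⟩ := hφb
  have hgi : Integrable (g : EuclideanSpace ℝ (Fin d) → ℝ) μX :=
    (Lp.memLp g).integrable (by norm_num)
  set h : EuclideanSpace ℝ (Fin d) → ℝ := fun u => ∫ x, g x * φ ⟪u, x⟫ ∂μX with hh
  -- continuity of h
  have hcont : Continuous h := by
    apply continuous_of_dominated (bound := fun x => C * |g x|)
    · intro u
      exact (Lp.aestronglyMeasurable g).mul
        ((hφc.comp (continuous_const.inner continuous_id)).aestronglyMeasurable)
    · intro u
      filter_upwards with x
      rw [Real.norm_eq_abs, abs_mul, mul_comm]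
      exact mul_le_mul_of_nonneg_right (hC _) (abs_nonneg _)
    · exact hgi.abs.const_mul C
    · filter_upwards with x
      exact continuous_const.mul (hφc.comp (continuous_id.inner continuous_const))
  -- h vanishes a.e. with respect to the law of w, hence everywhere
  have hmapae : ∀ᵐ u ∂(P₁.map w), h u = 0 := by
    rw [ae_map_iff hw.aemeasurable]
    · exact horth
    · exact measurableSet_eq_fun hcont.measurable measurable_const
  have hzero : ∀ u, h u = 0 := by
    by_contra hne
    push_neg at hne
    obtain ⟨u₀, hu₀⟩ := hne
    have hopen : IsOpen {u | h u ≠ 0} := isOpen_ne_fun hcont continuous_const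
    have hpos := hsupp _ hopen ⟨u₀, hu₀⟩
    have : (P₁.map w) {u | h u ≠ 0} = 0 := hmapae
    simp [this] at hpos
  -- g is orthogonal to every generator
  have hgen : ∀ F ∈ {F : Lp ℝ 2 μX | ∃ u : EuclideanSpace ℝ (Fin d),
      (F : EuclideanSpace ℝ (Fin d) → ℝ) =ᵐ[μX] fun x => φ ⟪u, x⟫},
      ⟪F, g⟫ = 0 := by
    rintro F ⟨u, hFu⟩
    rw [real_inner_comm, L2.inner_def]
    have : ∫ x, ⟪(g : EuclideanSpace ℝ (Fin d) → ℝ) x, F x⟫ ∂μX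
        = ∫ x, g x * φ ⟪u, x⟫ ∂μX := by
      apply integral_congr_ae
      filter_upwards [hFu] with x hx
      simp [hx, mul_comm]
    rw [this]
    exact hzero u
  -- hence g is in the orthogonal complement of the span, which is ⊥
  set K := Submodule.span ℝ
    {F : Lp ℝ 2 μX | ∃ u : EuclideanSpace ℝ (Fin d),
      (F : EuclideanSpace ℝ (Fin d) → ℝ) =ᵐ[μX] fun x => φ ⟪u, x⟫} with hK
  have hgK : g ∈ Kᗮ := by
    rw [Submodule.mem_orthogonal]
    intro F hF
    induction hF using Submodule.span_induction with
    | mem F hF => exact hgen F hF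
    | zero => simp
    | add F₁ F₂ _ _ h₁ h₂ => rw [inner_add_left, h₁, h₂, add_zero]
    | smul a F _ hF => rw [inner_smul_left, hF, mul_zero]
  have hKtop : K.topologicalClosure = ⊤ := by
    rw [← Submodule.dense_iff_topologicalClosure_eq_top] at *
    exact hUAP
  rw [Submodule.topologicalClosure_eq_top_iff] at hKtop
  rw [hKtop] at hgK
  exact hgK
end

section
/- Let (Ω, P) be a probability space, μ_X a Borel probability measure on a measurable space 𝒳, φ : ℝ → ℝ bounded and continuous such that the span of {φ ∘ h : h ∈ L²(μ_X)} is dense in L²(μ_X) (φ is non-obstructive). Let H : 𝒳 × Ω → ℝ be such that c ↦ H(·, c) defines a random element of L²(μ_X) whose law has full support in L²(μ_X). If g ∈ L²(μ_X) satisfies ∫ g(x) φ(H(x, c)) dμ_X(x) = 0 for P-almost every c, then g = 0. -/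
open MeasureTheory Topology Filter

set_option synthInstance.maxHeartbeats 1000000 in
/-- if `φ` is bounded continuous and non-obstructive, and the
random pre-activation `c ↦ H(·,c)` has full support in `L²(μX)`, then any `g`
orthogonal to `φ(H(·,c))` for almost every `c` vanishes.  Full support of the
law of `HC` is expressed by positivity of the probability of every ball. -/
theorem nonobstructive_full_support_orthogonal_eq_zero
    {Ω : Type*} [MeasureSpace Ω] (P : Measure Ω) [IsProbabilityMeasure P]
    {𝒳 : Type*} [MeasurableSpace 𝒳] (μX : Measure 𝒳) [IsProbabilityMeasure μX]
    (φ : ℝ → ℝ) (hφc : Continuous φ) (hφb : ∃ C : ℝ, ∀ s, |φ s| ≤ C)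
    (hnonobs : Dense (↑(Submodule.span ℝ
      {F : Lp ℝ 2 μX | ∃ h : Lp ℝ 2 μX,
        (F : 𝒳 → ℝ) =ᵐ[μX] fun x => φ (h x)}) : Set (Lp ℝ 2 μX)))
    (HC : Ω → Lp ℝ 2 μX)
    (hsupp : ∀ h : Lp ℝ 2 μX, ∀ δ > (0:ℝ), 0 < P {c | ‖HC c - h‖ < δ})
    (g : Lp ℝ 2 μX)
    (horth : ∀ᵐ c ∂P, ∫ x, g x * φ (HC c x) ∂μX = 0) :
    g = 0 := by
  obtain ⟨C, hC⟩ := hφb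
  have hgint : Integrable (g : 𝒳 → ℝ) μX :=
    (Lp.memLp g).integrable (by norm_num)
  have hmeas : ∀ h : Lp ℝ 2 μX,
      AEStronglyMeasurable (fun x => g x * φ (h x)) μX :=
    fun h => (Lp.aestronglyMeasurable g).mul
      (hφc.comp_aestronglyMeasurable (Lp.aestronglyMeasurable h))
  set S : Set (Lp ℝ 2 μX) := {h | ∫ x, g x * φ (h x) ∂μX = 0} with hSdef
  -- S is closed
  have hSclosed : IsClosed S := by
    refine IsSeqClosed.isClosed ?_
    intro f h hf hfh
    rw [Lp.tendsto_Lp_iff_tendsto_eLpNorm'] at hfh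
    have htm : TendstoInMeasure μX (fun n => (f n : 𝒳 → ℝ)) Filter.atTop (h : 𝒳 → ℝ) :=
      tendstoInMeasure_of_tendsto_eLpNorm_of_ne_top (by norm_num) (by norm_num)
        (fun n => Lp.aestronglyMeasurable _) (Lp.aestronglyMeasurable _) hfh
    obtain ⟨ns, _, hns⟩ := htm.exists_seq_tendsto_ae
    have hdct : Filter.Tendsto (fun k => ∫ x, g x * φ (f (ns k) x) ∂μX)
        Filter.atTop (𝓝 (∫ x, g x * φ (h x) ∂μX)) := by
      refine tendsto_integral_of_dominated_convergence (fun x => C * |g x|)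
        (fun k => hmeas _) (hgint.abs.const_mul C) ?_ ?_
      · intro k
        filter_upwards with x
        rw [Real.norm_eq_abs, abs_mul, mul_comm]
        exact mul_le_mul_of_nonneg_right (hC _) (abs_nonneg _)
      · filter_upwards [hns] with x hx
        exact (tendsto_const_nhds.mul ((hφc.tendsto _).comp hx))
    have : Filter.Tendsto (fun _ : ℕ => (0:ℝ)) Filter.atTop
        (𝓝 (∫ x, g x * φ (h x) ∂μX)) := by
      exact hdct.congr fun k => Eq.symm (hf (ns k) : _ = _) ▸ rfl
    exact (tendsto_nhds_unique tendsto_const_nhds this).symm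
  -- S is dense
  have hSdense : Dense S := by
    intro h
    rw [Metric.mem_closure_iff]
    intro δ hδ
    have hpos := hsupp h δ hδ
    have hfreq : ∃ᶠ c in ae P, ‖HC c - h‖ < δ := by
      rw [frequently_ae_iff]
      exact hpos.ne'
    obtain ⟨c, hc1, hc2⟩ := (hfreq.and_eventually horth).exists
    exact ⟨HC c, hc2, by rwa [dist_comm, dist_eq_norm]⟩
  have hSuniv : S = Set.univ := hSclosed.closure_eq ▸ hSdense.closure_eq
  -- inner product vanishes on spanning set
  have hinner : ∀ F ∈ {F : Lp ℝ 2 μX | ∃ h : Lp ℝ 2 μX,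
      (F : 𝒳 → ℝ) =ᵐ[μX] fun x => φ (h x)}, inner (𝕜 := ℝ) g F = 0 := by
    rintro F ⟨h, hF⟩
    have hS : h ∈ S := hSuniv ▸ Set.mem_univ h
    rw [L2.inner_def]
    rw [← hS]
    refine integral_congr_ae ?_
    filter_upwards [hF] with x hx
    simp [hx, mul_comm]
  -- extend to span by linearity, then to everything by density
  have hspan : ∀ F ∈ Submodule.span ℝ {F : Lp ℝ 2 μX | ∃ h : Lp ℝ 2 μX,
      (F : 𝒳 → ℝ) =ᵐ[μX] fun x => φ (h x)}, inner (𝕜 := ℝ) g F = 0 := by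
    intro F hF
    refine Submodule.span_induction (fun x hx => hinner x hx) (inner_zero_right _)
      (fun x y _ _ hx hy => by rw [inner_add_right, hx, hy, add_zero])
      (fun a x _ hx => by rw [inner_smul_right, hx, mul_zero]) hF
  have hall : ∀ F : Lp ℝ 2 μX, inner (𝕜 := ℝ) g F = 0 := by
    have hcont : Continuous fun F : Lp ℝ 2 μX => inner (𝕜 := ℝ) g F :=
      continuous_const.inner continuous_id
    have := Continuous.ext_on hnonobs hcont continuous_const
      (fun F hF => hspan F hF)
    exact fun F => congrFun this F
  have := hall g
  rwa [inner_self_eq_zero] at this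
end

section
/- Let φ : ℝ → ℝ be bounded, continuous, and non-constant. Then for any probability measure μ on a measurable space, the set {φ ∘ f : f ∈ L²(μ), f measurable and real-valued} has dense linear span in L²(μ). -/
open MeasureTheory

/-- a bounded continuous non-constant activation is
non-obstructive: `{φ ∘ f : f ∈ L²(μ)}` has dense linear span in `L²(μ)`. -/
theorem bounded_continuous_nonconstant_nonobstructive
    (φ : ℝ → ℝ) (hφc : Continuous φ) (hφb : ∃ C : ℝ, ∀ s, |φ s| ≤ C)
    (hφnc : ∃ s t : ℝ, φ s ≠ φ t)
    {α : Type*} [MeasurableSpace α] (μ : Measure α) [IsProbabilityMeasure μ] :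
    Dense (↑(Submodule.span ℝ
      {F : Lp ℝ 2 μ | ∃ f : α → ℝ, Measurable f ∧ MemLp f 2 μ ∧
        (F : α → ℝ) =ᵐ[μ] fun x => φ (f x)}) : Set (Lp ℝ 2 μ)) := by
  classical
  obtain ⟨C, hC⟩ := hφb
  obtain ⟨b, a, hab⟩ := hφnc
  set S : Set (Lp ℝ 2 μ) :=
    {F : Lp ℝ 2 μ | ∃ f : α → ℝ, Measurable f ∧ MemLp f 2 μ ∧
        (F : α → ℝ) =ᵐ[μ] fun x => φ (f x)} with hS
  set T : Submodule ℝ (Lp ℝ 2 μ) := (Submodule.span ℝ S).topologicalClosure with hT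
  -- the step functions
  set g : Set α → α → ℝ := fun A => A.piecewise (fun _ => b) (fun _ => a) with hg
  have hgmeas : ∀ (A : Set α), MeasurableSet A → Measurable (g A) := fun A hA =>
    Measurable.piecewise hA measurable_const measurable_const
  have hφmem : ∀ (f : α → ℝ), Measurable f → MemLp (fun x => φ (f x)) 2 μ := by
    intro f hf
    refine MemLp.of_bound ((hφc.measurable.comp hf).aestronglyMeasurable) C
      (Filter.Eventually.of_forall fun x => ?_)
    simpa using hC (f x)
  -- the Lp elements corresponding to φ ∘ g A
  have hGmem : ∀ (A : Set α) (hA : MeasurableSet A),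
      ((hφmem (g A) (hgmeas A hA)).toLp (fun x => φ (g A x))) ∈ Submodule.span ℝ S := by
    intro A hA
    refine Submodule.subset_span ⟨g A, hgmeas A hA, ?_, MemLp.coeFn_toLp _⟩
    refine MemLp.of_bound (hgmeas A hA).aestronglyMeasurable (max ‖a‖ ‖b‖)
      (Filter.Eventually.of_forall fun x => ?_)
    rw [hg]
    by_cases hx : x ∈ A <;>
      simp [Set.piecewise, hx, le_max_left, le_max_right]
  have hd : φ b - φ a ≠ 0 := sub_ne_zero.mpr hab
  -- indicators are in T
  have hind : ∀ (c : ℝ) (A : Set α) (hA : MeasurableSet A) (hμA : μ A ≠ ⊤),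
      (indicatorConstLp 2 hA hμA c) ∈ T := by
    intro c A hA hμA
    have hmem1 := hGmem A hA
    have hmem0 := hGmem ∅ MeasurableSet.empty
    have hkey : indicatorConstLp 2 hA hμA (φ b - φ a)
        = ((hφmem (g A) (hgmeas A hA)).toLp (fun x => φ (g A x)))
          - ((hφmem (g ∅) (hgmeas ∅ MeasurableSet.empty)).toLp (fun x => φ (g ∅ x))) := by
      apply Lp.ext
      filter_upwards [indicatorConstLp_coeFn (μ := μ) (p := 2) (hs := hA) (hμs := hμA)
          (c := φ b - φ a),
        Lp.coeFn_sub ((hφmem (g A) (hgmeas A hA)).toLp (fun x => φ (g A x)))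
          ((hφmem (g ∅) (hgmeas ∅ MeasurableSet.empty)).toLp (fun x => φ (g ∅ x))),
        MemLp.coeFn_toLp (hφmem (g A) (hgmeas A hA)),
        MemLp.coeFn_toLp (hφmem (g ∅) (hgmeas ∅ MeasurableSet.empty))]
        with x hx1 hx2 hx3 hx4
      rw [hx1, hx2, Pi.sub_apply, hx3, hx4, hg]
      by_cases hx : x ∈ A <;> simp [Set.piecewise, Set.indicator, hx]
    have hspan : indicatorConstLp 2 hA hμA (φ b - φ a) ∈ Submodule.span ℝ S := by
      rw [hkey]; exact Submodule.sub_mem _ hmem1 hmem0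
    have hsmul : indicatorConstLp 2 hA hμA c
        = (c / (φ b - φ a)) • indicatorConstLp 2 hA hμA (φ b - φ a) := by
      apply Lp.ext
      filter_upwards [indicatorConstLp_coeFn (μ := μ) (p := 2) (hs := hA) (hμs := hμA) (c := c),
        indicatorConstLp_coeFn (μ := μ) (p := 2) (hs := hA) (hμs := hμA) (c := φ b - φ a),
        Lp.coeFn_smul (c / (φ b - φ a)) (indicatorConstLp 2 hA hμA (φ b - φ a))]
        with x hx1 hx2 hx3
      rw [hx1, hx3, Pi.smul_apply, hx2]
      by_cases hx : x ∈ A <;> simp [Set.indicator, hx, div_mul_cancel₀, hd]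
    rw [hsmul]
    exact T.smul_mem _ (Submodule.le_topologicalClosure _ hspan)
  -- every element of Lp lies in T, by induction on simple functions
  have hall : ∀ F : Lp ℝ 2 μ, F ∈ T := by
    refine Lp.induction (by norm_num : (2 : ENNReal) ≠ ⊤) (fun F => F ∈ T) ?_ ?_ ?_
    · intro c A hA hμA
      rw [Lp.simpleFunc.coe_indicatorConst]
      exact hind c A hA hμA.ne
    · intro f g hf hg hdisj hF hG
      exact T.add_mem hF hG
    · have : {f : Lp ℝ 2 μ | f ∈ T} = (T : Set (Lp ℝ 2 μ)) := rfl
      rw [this, hT]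
      exact (Submodule.span ℝ S).isClosed_topologicalClosure
  have htop : T = ⊤ := Submodule.eq_top_iff'.mpr hall
  rw [dense_iff_closure_eq, ← Submodule.topologicalClosure_coe, ← hT, htop, Submodule.top_coe]
end

section
/- Consider the two-layer mean-field quantities: given a probability space (Ω₁, P₁), weights w₁ : Ω₁ → ℝ^d, w₂ : Ω₁ → ℝ, a bounded continuous activation φ₁ with universal approximation property (span{φ₁(⟨u,·⟩) : u ∈ ℝ^d} dense in L²(μ_X)), and supp(law(w₁(C₁))) = ℝ^d. Define 𝓗₂(f)(x) = E_{C₁}[f(C₁) φ₁(⟨w₁(C₁), x⟩)] for f ∈ L²(P₁). Then the closure of {𝓗₂(f) : f ∈ L²(P₁)} in L²(μ_X) equals L²(μ_X). -/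
open MeasureTheory
open scoped RealInnerProductSpace

/-- base case of Step 2.  Under universal approximation for `φ₁`
and full support of `law(w₁)`, the range of
`𝓗₂ : f ↦ (x ↦ E_{C₁}[f(C₁) φ₁(⟨w₁(C₁), x⟩)])` is dense in `L²(μX)`. -/
theorem two_layer_dense_range
    {Ω₁ : Type*} [MeasureSpace Ω₁] (P₁ : Measure Ω₁) [IsProbabilityMeasure P₁]
    (d : ℕ) (μX : Measure (EuclideanSpace ℝ (Fin d))) [IsProbabilityMeasure μX]
    (R : ℝ) (hbdd : ∀ᵐ x ∂μX, ‖x‖ ≤ R)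
    (φ₁ : ℝ → ℝ) (hφc : Continuous φ₁) (hφb : ∃ C : ℝ, ∀ s, |φ₁ s| ≤ C)
    (hUAP : Dense (↑(Submodule.span ℝ
      {F : Lp ℝ 2 μX | ∃ u : EuclideanSpace ℝ (Fin d),
        (F : EuclideanSpace ℝ (Fin d) → ℝ) =ᵐ[μX] fun x => φ₁ ⟪u, x⟫}) :
        Set (Lp ℝ 2 μX)))
    (w₁ : Ω₁ → EuclideanSpace ℝ (Fin d)) (hw₁ : Measurable w₁)
    (hsupp : ∀ U : Set (EuclideanSpace ℝ (Fin d)), IsOpen U → U.Nonempty →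
      0 < (P₁.map w₁) U) :
    Dense {F : Lp ℝ 2 μX | ∃ f : Ω₁ → ℝ, MemLp f 2 P₁ ∧
      (F : EuclideanSpace ℝ (Fin d) → ℝ) =ᵐ[μX]
        fun x => ∫ c₁, f c₁ * φ₁ ⟪w₁ c₁, x⟫ ∂P₁} := by
  classical
  obtain ⟨C, hC⟩ := hφb
  have hC0 : 0 ≤ C := (abs_nonneg _).trans (hC 0)
  have hmeasφ : ∀ x : EuclideanSpace ℝ (Fin d),
      AEStronglyMeasurable (fun c => φ₁ ⟪w₁ c, x⟫) P₁ := fun x =>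
    ((hφc.comp (continuous_id.inner continuous_const)).measurable.comp hw₁).aestronglyMeasurable
  have hint : ∀ (f : Ω₁ → ℝ), MemLp f 2 P₁ → ∀ x : EuclideanSpace ℝ (Fin d),
      Integrable (fun c => f c * φ₁ ⟪w₁ c, x⟫) P₁ := by
    intro f hf x
    have h1 : Integrable f P₁ := hf.integrable one_le_two
    have h2 := Integrable.bdd_mul h1 (hmeasφ x)
      (Filter.Eventually.of_forall fun c => by rw [Real.norm_eq_abs]; exact hC _)
    exact h2.congr (Filter.Eventually.of_forall fun c => mul_comm _ _)
  -- the candidate subspace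
  let p : Submodule ℝ (Lp ℝ 2 μX) :=
    { carrier := {F : Lp ℝ 2 μX | ∃ f : Ω₁ → ℝ, MemLp f 2 P₁ ∧
        (F : EuclideanSpace ℝ (Fin d) → ℝ) =ᵐ[μX]
          fun x => ∫ c₁, f c₁ * φ₁ ⟪w₁ c₁, x⟫ ∂P₁}
      add_mem' := by
        rintro F G ⟨f, hf, hFf⟩ ⟨g, hg, hGg⟩
        refine ⟨f + g, hf.add hg, ?_⟩
        filter_upwards [Lp.coeFn_add F G, hFf, hGg] with x h1 h2 h3
        have hfg : (fun c => (f + g) c * φ₁ ⟪w₁ c, x⟫)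
            = fun c => f c * φ₁ ⟪w₁ c, x⟫ + g c * φ₁ ⟪w₁ c, x⟫ := by
          funext c; simp [add_mul]
        rw [h1, Pi.add_apply, h2, h3, hfg,
          integral_add (hint f hf x) (hint g hg x)]
      zero_mem' := by
        refine ⟨0, MemLp.zero, ?_⟩
        filter_upwards [Lp.coeFn_zero ℝ 2 μX] with x h
        simp [h]
      smul_mem' := by
        rintro a F ⟨f, hf, hFf⟩
        refine ⟨a • f, hf.const_smul a, ?_⟩
        filter_upwards [Lp.coeFn_smul a F, hFf] with x h1 h2
        have hfg : (fun c => (a • f) c * φ₁ ⟪w₁ c, x⟫)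
            = fun c => a * (f c * φ₁ ⟪w₁ c, x⟫) := by
          funext c; simp [mul_assoc]
        rw [h1, Pi.smul_apply, smul_eq_mul, h2, hfg, integral_const_mul] }
  -- generators lie in the closure of `p`
  have hgen : ∀ F : Lp ℝ 2 μX, ∀ u : EuclideanSpace ℝ (Fin d),
      (F : EuclideanSpace ℝ (Fin d) → ℝ) =ᵐ[μX] (fun x => φ₁ ⟪u, x⟫) →
      F ∈ closure (p : Set (Lp ℝ 2 μX)) := by
    intro F u hF
    rw [Metric.mem_closure_iff]
    intro ε hε
    set R' : ℝ := |R| + 1 with hR'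
    have hR'pos : 0 < R' := by positivity
    have hK : IsCompact (Set.Icc (-((‖u‖ + 1) * R')) ((‖u‖ + 1) * R')) := isCompact_Icc
    have hUC := hK.uniformContinuousOn_of_continuous hφc.continuousOn
    rw [Metric.uniformContinuousOn_iff] at hUC
    obtain ⟨δ, hδpos, hδ⟩ := hUC (ε / 2) (by positivity)
    set η : ℝ := min (δ / R') 1 with hη
    have hηpos : 0 < η := lt_min (by positivity) one_pos
    set A : Set Ω₁ := w₁ ⁻¹' Metric.ball u η with hA
    have hAm : MeasurableSet A := hw₁ measurableSet_ball
    have hm0 : 0 < P₁ A := by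
      have h := hsupp (Metric.ball u η) Metric.isOpen_ball
        ⟨u, Metric.mem_ball_self hηpos⟩
      rwa [Measure.map_apply hw₁ measurableSet_ball] at h
    set m : ℝ := (P₁ A).toReal with hmdef
    have hmpos : 0 < m := ENNReal.toReal_pos hm0.ne' (measure_ne_top _ _)
    set f : Ω₁ → ℝ := A.indicator (fun _ => m⁻¹) with hfdef
    have hfmeas : Measurable f := measurable_const.indicator hAm
    have hfbd : ∀ c, ‖f c‖ ≤ m⁻¹ := by
      intro c
      rw [Real.norm_eq_abs]
      by_cases h : c ∈ A
      · rw [hfdef, Set.indicator_of_mem h, abs_of_nonneg (inv_nonneg.2 hmpos.le)]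
      · rw [hfdef, Set.indicator_of_notMem h, abs_zero]
        positivity
    have hf2 : MemLp f 2 P₁ :=
      MemLp.of_bound hfmeas.aestronglyMeasurable m⁻¹ (Filter.Eventually.of_forall hfbd)
    have hfint : Integrable f P₁ := hf2.integrable one_le_two
    have hintf : ∫ c, f c ∂P₁ = 1 := by
      rw [hfdef, integral_indicator hAm, setIntegral_const, smul_eq_mul, measureReal_def, ← hmdef,
        mul_inv_cancel₀ hmpos.ne']
    set Gf : EuclideanSpace ℝ (Fin d) → ℝ :=
      fun x => ∫ c, f c * φ₁ ⟪w₁ c, x⟫ ∂P₁ with hGfdef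
    have hGint : ∀ x, Integrable (fun c => f c * φ₁ ⟪w₁ c, x⟫) P₁ := hint f hf2
    have hGcont : Continuous Gf := by
      apply continuous_of_dominated (bound := fun c => ‖f c‖ * C)
      · intro x; exact hfmeas.aestronglyMeasurable.mul (hmeasφ x)
      · intro x
        refine Filter.Eventually.of_forall fun c => ?_
        rw [norm_mul]
        exact mul_le_mul_of_nonneg_left
          (by rw [Real.norm_eq_abs]; exact hC _) (norm_nonneg _)
      · exact hfint.norm.mul_const C
      · exact Filter.Eventually.of_forall fun c =>
          continuous_const.mul (hφc.comp (continuous_const.inner continuous_id))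
    have hGbd : ∀ x, ‖Gf x‖ ≤ m⁻¹ * C := by
      intro x
      calc ‖Gf x‖ ≤ ∫ c, ‖f c * φ₁ ⟪w₁ c, x⟫‖ ∂P₁ := norm_integral_le_integral_norm _
        _ ≤ ∫ _c, m⁻¹ * C ∂P₁ := by
            refine integral_mono (hGint x).norm (integrable_const _) fun c => ?_
            rw [norm_mul]
            exact mul_le_mul (hfbd c) (by rw [Real.norm_eq_abs]; exact hC _)
              (norm_nonneg _) (by positivity)
        _ = m⁻¹ * C := by simp
    have hG2 : MemLp Gf 2 μX :=
      MemLp.of_bound hGcont.aestronglyMeasurable _ (Filter.Eventually.of_forall hGbd)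
    refine ⟨hG2.toLp Gf, ⟨f, hf2, hG2.coeFn_toLp⟩, ?_⟩
    have hae : ∀ᵐ x ∂μX,
        ‖(F : EuclideanSpace ℝ (Fin d) → ℝ) x - (hG2.toLp Gf : EuclideanSpace ℝ (Fin d) → ℝ) x‖ ≤ ε / 2 := by
      filter_upwards [hF, hG2.coeFn_toLp, hbdd] with x h1 h2 hx
      rw [h1, h2]
      have hxR : ‖x‖ ≤ R' := hx.trans (by rw [hR']; have := le_abs_self R; linarith)
      have key : φ₁ ⟪u, x⟫ - Gf x = ∫ c, f c * (φ₁ ⟪u, x⟫ - φ₁ ⟪w₁ c, x⟫) ∂P₁ := by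
        have h3 : (fun c => f c * (φ₁ ⟪u, x⟫ - φ₁ ⟪w₁ c, x⟫))
            = fun c => f c * φ₁ ⟪u, x⟫ - f c * φ₁ ⟪w₁ c, x⟫ := by funext c; ring
        rw [h3, integral_sub (hfint.mul_const _) (hGint x), integral_mul_const, hintf,
          one_mul]
      have hsubint : Integrable (fun c => f c * (φ₁ ⟪u, x⟫ - φ₁ ⟪w₁ c, x⟫)) P₁ := by
        have h3 : (fun c => f c * (φ₁ ⟪u, x⟫ - φ₁ ⟪w₁ c, x⟫))
            = fun c => f c * φ₁ ⟪u, x⟫ - f c * φ₁ ⟪w₁ c, x⟫ := by funext c; ring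
        rw [h3]; exact (hfint.mul_const _).sub (hGint x)
      have hptw : ∀ c, ‖f c * (φ₁ ⟪u, x⟫ - φ₁ ⟪w₁ c, x⟫)‖ ≤ f c * (ε / 2) := by
        intro c
        by_cases h : c ∈ A
        · have hfc : f c = m⁻¹ := by rw [hfdef, Set.indicator_of_mem h]
          have hwc : w₁ c ∈ Metric.ball u η := h
          have hd2 : ‖u - w₁ c‖ < η := by
            rw [norm_sub_rev]; rwa [Metric.mem_ball, dist_eq_norm] at hwc
          have hwn : ‖w₁ c‖ ≤ ‖u‖ + 1 := by
            have h4 := norm_sub_norm_le (w₁ c) u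
            have h5 : ‖w₁ c - u‖ < η := by rwa [norm_sub_rev] at hd2
            have h6 : η ≤ 1 := min_le_right _ _
            linarith
          have h1K : ⟪u, x⟫ ∈ Set.Icc (-((‖u‖ + 1) * R')) ((‖u‖ + 1) * R') := by
            have h7 := abs_le.mp (abs_real_inner_le_norm u x)
            have h8 : ‖u‖ * ‖x‖ ≤ (‖u‖ + 1) * R' := by
              nlinarith [norm_nonneg u, norm_nonneg x]
            exact ⟨by linarith [h7.1], by linarith [h7.2]⟩
          have h2K : ⟪w₁ c, x⟫ ∈ Set.Icc (-((‖u‖ + 1) * R')) ((‖u‖ + 1) * R') := by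
            have h7 := abs_le.mp (abs_real_inner_le_norm (w₁ c) x)
            have h8 : ‖w₁ c‖ * ‖x‖ ≤ (‖u‖ + 1) * R' := by
              nlinarith [norm_nonneg (w₁ c), norm_nonneg x]
            exact ⟨by linarith [h7.1], by linarith [h7.2]⟩
          have hηδ : η * R' ≤ δ := by
            calc η * R' ≤ δ / R' * R' :=
                  mul_le_mul_of_nonneg_right (min_le_left _ _) hR'pos.le
              _ = δ := div_mul_cancel₀ _ hR'pos.ne'
          have hdist : dist ⟪u, x⟫ ⟪w₁ c, x⟫ < δ := by
            rw [Real.dist_eq]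
            have h9 : |⟪u, x⟫ - ⟪w₁ c, x⟫| = |⟪u - w₁ c, x⟫| := by
              rw [inner_sub_left]
            calc |⟪u, x⟫ - ⟪w₁ c, x⟫| = |⟪u - w₁ c, x⟫| := h9
              _ ≤ ‖u - w₁ c‖ * ‖x‖ := abs_real_inner_le_norm _ _
              _ < η * R' := by nlinarith [norm_nonneg x, norm_nonneg (u - w₁ c)]
              _ ≤ δ := hηδ
          have h10 := hδ _ h1K _ h2K hdist
          rw [Real.dist_eq] at h10
          rw [norm_mul, hfc, Real.norm_eq_abs m⁻¹, abs_of_nonneg (by positivity : (0:ℝ) ≤ m⁻¹),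
            Real.norm_eq_abs]
          exact mul_le_mul_of_nonneg_left h10.le (by positivity)
        · have hfc : f c = 0 := by rw [hfdef, Set.indicator_of_notMem h]
          simp [hfc]
      have hnorm : ‖φ₁ ⟪u, x⟫ - Gf x‖ ≤ ε / 2 := by
        rw [key]
        refine (norm_integral_le_integral_norm _).trans ?_
        calc ∫ c, ‖f c * (φ₁ ⟪u, x⟫ - φ₁ ⟪w₁ c, x⟫)‖ ∂P₁
            ≤ ∫ c, f c * (ε / 2) ∂P₁ :=
              integral_mono hsubint.norm (hfint.mul_const _) hptw
          _ = ε / 2 := by rw [integral_mul_const, hintf, one_mul]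
      exact hnorm
    rw [Lp.dist_def]
    have hsub : (↑(F - hG2.toLp Gf) : EuclideanSpace ℝ (Fin d) → ℝ)
        =ᵐ[μX] (↑F : EuclideanSpace ℝ (Fin d) → ℝ) - (hG2.toLp Gf : EuclideanSpace ℝ (Fin d) → ℝ) := Lp.coeFn_sub _ _
    have hbound : ∀ᵐ x ∂μX,
        ‖((↑F : EuclideanSpace ℝ (Fin d) → ℝ) - (hG2.toLp Gf : EuclideanSpace ℝ (Fin d) → ℝ)) x‖ ≤ ε / 2 := by
      filter_upwards [hae] with x hx
      simpa using hx
    have h11 : eLpNorm ((↑F : EuclideanSpace ℝ (Fin d) → ℝ) - (hG2.toLp Gf : EuclideanSpace ℝ (Fin d) → ℝ)) 2 μX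
        ≤ ENNReal.ofReal (ε / 2) := by
      refine (eLpNorm_le_of_ae_bound hbound).trans_eq ?_
      simp
    calc (eLpNorm ((↑F : EuclideanSpace ℝ (Fin d) → ℝ) - (hG2.toLp Gf : EuclideanSpace ℝ (Fin d) → ℝ)) 2 μX).toReal
        ≤ (ENNReal.ofReal (ε / 2)).toReal :=
          ENNReal.toReal_mono ENNReal.ofReal_ne_top h11
      _ = ε / 2 := ENNReal.toReal_ofReal (by positivity)
      _ < ε := by linarith
  -- conclude density
  have hspan : (↑(Submodule.span ℝ
      {F : Lp ℝ 2 μX | ∃ u : EuclideanSpace ℝ (Fin d),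
        (F : EuclideanSpace ℝ (Fin d) → ℝ) =ᵐ[μX] fun x => φ₁ ⟪u, x⟫}) : Set (Lp ℝ 2 μX))
      ⊆ closure (p : Set (Lp ℝ 2 μX)) := by
    rw [← Submodule.topologicalClosure_coe]
    refine SetLike.coe_subset_coe.mpr (Submodule.span_le.mpr ?_)
    rintro F ⟨u, hu⟩
    exact hgen F u hu
  show Dense (p : Set (Lp ℝ 2 μX))
  rw [dense_iff_closure_eq] at hUAP ⊢
  apply Set.eq_univ_of_univ_subset
  calc (Set.univ : Set (Lp ℝ 2 μX)) = _ := hUAP.symm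
    _ ⊆ closure (closure (p : Set (Lp ℝ 2 μX))) := closure_mono hspan
    _ = closure (p : Set (Lp ℝ 2 μX)) := closure_closure
end
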